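/- For the group-similarity corrupted affinity matrix W̃, the value N_i w_i + Σ_{j≠i} N_j w̃_{i,j} is a (standard) eigenvalue of the corrupted Laplacian L̃ with geometric multiplicity at least N_i − 1; that is, the kernel of L̃ − (N_i w_i + Σ_{j≠i} N_j w̃_{i,j})·I has dimension at least N_i − 1. -/

import Mathlib

-- auxiliary: cardinality of fibers of β
theorem block_card
    (K : ℕ) (n : Fin K → ℕ)
    (N : ℕ) (hN : N = ∑ i, n i)
    (β : Fin N → Fin K)
    (hβ : ∀ m : Fin N,
      (∑ k ∈ Finset.univ.filter (fun k => k < β m), n k) ≤ m.val ∧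
      m.val < (∑ k ∈ Finset.univ.filter (fun k => k < β m), n k) + n (β m))
    (j : Fin K) :
    (Finset.univ.filter (fun m : Fin N => β m = j)).card = n j := by
  set s : Fin K → ℕ := fun k => ∑ k' ∈ Finset.univ.filter (fun k' => k' < k), n k' with hs
  have hmono : ∀ a b : Fin K, a < b → s a + n a ≤ s b := by
    intro a b hab
    have hsub : insert a (Finset.univ.filter (fun k' => k' < a)) ⊆
        Finset.univ.filter (fun k' => k' < b) := by
      intro x hx
      simp only [Finset.mem_insert, Finset.mem_filter, Finset.mem_univ, true_and] at hx ⊢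
      rcases hx with rfl | hx
      · exact hab
      · exact lt_trans hx hab
    have hnot : a ∉ Finset.univ.filter (fun k' => k' < a) := by simp
    calc s a + n a = ∑ k' ∈ insert a (Finset.univ.filter (fun k' => k' < a)), n k' := by
          rw [Finset.sum_insert hnot]; ring
      _ ≤ s b := Finset.sum_le_sum_of_subset hsub
  have hβ' : ∀ m : Fin N, s (β m) ≤ m.val ∧ m.val < s (β m) + n (β m) := fun m => hβ m
  have hchar : ∀ (m : Fin N), s j ≤ m.val → m.val < s j + n j → β m = j := by
    intro m h1 h2
    by_contra hne
    rcases lt_or_gt_of_ne hne with h | h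
    · have := hmono (β m) j h
      have := (hβ' m).2
      omega
    · have := hmono j (β m) h
      have := (hβ' m).1
      omega
  have hle : s j + n j ≤ N := by
    have hsub : insert j (Finset.univ.filter (fun k' => k' < j)) ⊆ Finset.univ := by
      intro x _; simp
    have hnot : j ∉ Finset.univ.filter (fun k' => k' < j) := by simp
    calc s j + n j = ∑ k' ∈ insert j (Finset.univ.filter (fun k' => k' < j)), n k' := by
          rw [Finset.sum_insert hnot]; ring
      _ ≤ ∑ k', n k' := Finset.sum_le_sum_of_subset hsub
      _ = N := hN.symm
  have hIco : (Finset.Ico (s j) (s j + n j)).card = n j := by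
    rw [Nat.card_Ico]; omega
  rw [← hIco]
  apply Finset.card_bij (fun m _ => m.val)
  · intro m hm
    simp only [Finset.mem_filter, Finset.mem_univ, true_and] at hm
    have := hβ' m
    rw [hm] at this
    simp only [Finset.mem_Ico]
    exact this
  · intro a ha b hb hab
    exact Fin.val_injective hab
  · intro x hx
    simp only [Finset.mem_Ico] at hx
    refine ⟨⟨x, lt_of_lt_of_le hx.2 hle⟩, ?_, rfl⟩
    simp only [Finset.mem_filter, Finset.mem_univ, true_and]
    exact hchar _ hx.1 hx.2



/-- For the group-similarity corrupted affinity matrix `W̃`, the value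
`n i * w i + ∑_{j ≠ i} n j * w̃ i j` is a (standard) eigenvalue of the corrupted Laplacian
`L̃` with geometric multiplicity at least `n i - 1`; that is, the kernel of
`L̃ - (n i * w i + ∑_{j ≠ i} n j * w̃ i j) • I` has dimension at least `n i - 1`. -/
theorem groupSim_standard_eigenvalue_block_i
    (K : ℕ) (hK : 2 ≤ K)
    (n : Fin K → ℕ) (hn : ∀ i, 2 ≤ n i)
    (w : Fin K → ℝ) (hw : ∀ i, 0 < w i)
    (N : ℕ) (hN : N = ∑ i, n i)
    (β : Fin N → Fin K)
    (hβ : ∀ m : Fin N,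
      (∑ k ∈ Finset.univ.filter (fun k => k < β m), n k) ≤ m.val ∧
      m.val < (∑ k ∈ Finset.univ.filter (fun k => k < β m), n k) + n (β m))
    (W : Matrix (Fin N) (Fin N) ℝ)
    (hW : ∀ m p, W m p = if m ≠ p ∧ β m = β p then w (β m) else 0)
    (i : Fin K)
    (wt : Fin K → ℝ) (hwt : ∀ j, j ≠ i → 0 < wt j)
    (Wt : Matrix (Fin N) (Fin N) ℝ)
    (hWt : ∀ m p, Wt m p =
      if β m = β p then W m p
      else if β m = i then wt (β p)
      else if β p = i then wt (β m)
      else 0)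
    (Dt : Matrix (Fin N) (Fin N) ℝ)
    (hDt : Dt = Matrix.diagonal (fun m => ∑ p, Wt m p))
    (Lt : Matrix (Fin N) (Fin N) ℝ)
    (hLt : Lt = Dt - Wt) :
    n i - 1 ≤
      Module.finrank ℝ
        ↥(LinearMap.ker
          (Matrix.toLin'
            (Lt -
              ((n i : ℝ) * w i + ∑ j ∈ Finset.univ.erase i, (n j : ℝ) * wt j) •
                (1 : Matrix (Fin N) (Fin N) ℝ)))) := by
  have hcard := block_card K n N hN β hβ
  set S : ℝ := ∑ j ∈ Finset.univ.erase i, (n j : ℝ) * wt j with hS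
  set lam : ℝ := (n i : ℝ) * w i + S with hlam
  set M : Matrix (Fin N) (Fin N) ℝ := Lt - lam • (1 : Matrix (Fin N) (Fin N) ℝ) with hM
  set B : Finset (Fin N) := Finset.univ.filter (fun m => β m = i) with hB
  have hBcard : B.card = n i := hcard i
  -- pointwise description of rows in block i
  have hWtrow : ∀ p : Fin N, β p = i → ∀ q, Wt p q =
      if β q = i then (if p ≠ q then w i else 0) else wt (β q) := by
    intro p hp q
    by_cases h : β q = i
    · have hpq : β p = β q := by rw [hp, h]
      rw [hWt, if_pos hpq, hW, if_pos h]
      by_cases hq : p = q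
      · simp [hq]
      · rw [if_pos ⟨hq, hpq⟩, if_pos hq, hp]
    · have hpq : β p ≠ β q := by rw [hp]; exact fun hh => h hh.symm
      rw [hWt, if_neg hpq, if_pos hp, if_neg h]
  -- row sums for rows in block i
  have hrow : ∀ p : Fin N, β p = i → ∑ q, Wt p q = ((n i : ℝ) - 1) * w i + S := by
    intro p hp
    calc ∑ q, Wt p q
        = ∑ q ∈ Finset.univ.filter (fun q => β q = i), Wt p q
          + ∑ q ∈ Finset.univ.filter (fun q => ¬ β q = i), Wt p q := by
          rw [Finset.sum_filter_add_sum_filter_not]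
      _ = ((n i : ℝ) - 1) * w i + S := by
          congr 1
          · have key : ∀ q ∈ Finset.univ.filter (fun q => β q = i),
                Wt p q = w i - (if q = p then w i else 0) := by
              intro q hq
              simp only [Finset.mem_filter, Finset.mem_univ, true_and] at hq
              rw [hWtrow p hp q, if_pos hq]
              by_cases h : q = p
              · subst h; simp
              · rw [if_pos (fun hh => h hh.symm), if_neg h, sub_zero]
            rw [Finset.sum_congr rfl key, Finset.sum_sub_distrib,
              Finset.sum_const, Finset.sum_ite_eq' _ p]
            have hpB : p ∈ Finset.univ.filter (fun q => β q = i) := by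
              simp [hp]
            rw [if_pos hpB]
            rw [← hB, hBcard]
            ring
          · -- sum of wt over out-of-block indices
            rw [← Finset.sum_fiberwise_of_maps_to
              (g := β) (t := Finset.univ.erase i)
              (fun x hx => by
                simp only [Finset.mem_filter, Finset.mem_univ, true_and] at hx
                simp [hx])]
            apply Finset.sum_congr rfl
            intro j hj
            have hji : j ≠ i := (Finset.mem_erase.mp hj).1
            have hset : (Finset.univ.filter (fun q => ¬ β q = i)).filter (fun q => β q = j)
                = Finset.univ.filter (fun q : Fin N => β q = j) := by
              ext q
              simp only [Finset.mem_filter, Finset.mem_univ, true_and]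
              constructor
              · exact fun h => h.2
              · exact fun h => ⟨by rw [h]; exact hji, h⟩
            rw [hset]
            have key : ∀ q ∈ Finset.univ.filter (fun q : Fin N => β q = j),
                Wt p q = wt j := by
              intro q hq
              simp only [Finset.mem_filter, Finset.mem_univ, true_and] at hq
              rw [hWtrow p hp q, if_neg (by rw [hq]; exact hji), hq]
            rw [Finset.sum_congr rfl key, Finset.sum_const, hcard j, nsmul_eq_mul]
  -- kernel membership
  have hker : ∀ v : Fin N → ℝ, (∀ q, β q ≠ i → v q = 0) → (∑ q, v q = 0) →
      M.mulVec v = 0 := by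
    intro v hsupp hsum
    have hMv : M.mulVec v = Lt.mulVec v - lam • v := by
      rw [hM, Matrix.sub_mulVec, Matrix.smul_mulVec, Matrix.one_mulVec]
    funext p
    have hLtv : Lt.mulVec v p = (∑ q, Wt p q) * v p - ∑ q, Wt p q * v q := by
      rw [hLt, Matrix.sub_mulVec, Pi.sub_apply, hDt, Matrix.mulVec_diagonal]
      rfl
    by_cases hp : β p = i
    · have hWsum : ∑ q, Wt p q * v q = - (w i * v p) := by
        have key : ∀ q, Wt p q * v q = w i * v q - (if q = p then w i * v p else 0) := by
          intro q
          rw [hWtrow p hp q]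
          by_cases hq : β q = i
          · rw [if_pos hq]
            by_cases h : q = p
            · subst h; simp
            · rw [if_pos (fun hh => h hh.symm), if_neg h]; ring
          · rw [if_neg hq, hsupp q hq]
            have : q ≠ p := fun hh => hq (hh ▸ hp)
            rw [if_neg this]; ring
        rw [Finset.sum_congr rfl (fun q _ => key q), Finset.sum_sub_distrib,
          ← Finset.mul_sum, hsum, Finset.sum_ite_eq' _ p, if_pos (Finset.mem_univ p)]
        ring
      have := hrow p hp
      rw [hMv]
      simp only [Pi.sub_apply, Pi.smul_apply, smul_eq_mul, Pi.zero_apply]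
      rw [hLtv, hWsum, this, hlam]
      ring
    · have hvp : v p = 0 := hsupp p hp
      have hWsum : ∑ q, Wt p q * v q = 0 := by
        have key : ∀ q, Wt p q * v q = wt (β p) * v q := by
          intro q
          by_cases hq : β q = i
          · have hpq : β p ≠ β q := by rw [hq]; exact hp
            rw [hWt, if_neg hpq, if_neg hp, if_pos hq]
          · rw [hsupp q hq, mul_zero, mul_zero]
        rw [Finset.sum_congr rfl (fun q _ => key q), ← Finset.mul_sum, hsum, mul_zero]
      rw [hMv]
      simp only [Pi.sub_apply, Pi.smul_apply, smul_eq_mul, Pi.zero_apply]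
      rw [hLtv, hWsum, hvp]
      ring
  -- choose base point
  have hBne : B.Nonempty := by
    rw [← Finset.card_pos, hBcard]
    have := hn i; omega
  obtain ⟨m₀, hm₀⟩ := hBne
  have hβm₀ : β m₀ = i := by
    have := hm₀; rw [hB, Finset.mem_filter] at this; exact this.2
  set B' : Finset (Fin N) := B.erase m₀ with hB'
  have hB'card : B'.card = n i - 1 := by
    rw [hB', Finset.card_erase_of_mem hm₀, hBcard]
  -- the family of vectors
  set f : B' → (Fin N → ℝ) :=
    fun m => Pi.single (m : Fin N) 1 - Pi.single m₀ 1 with hf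
  have hfmem : ∀ m : B', f m ∈ LinearMap.ker (Matrix.toLin' M) := by
    intro m
    have hmB : (m : Fin N) ∈ B := Finset.mem_of_mem_erase m.2
    have hβm : β (m : Fin N) = i := by
      have := hmB; rw [hB, Finset.mem_filter] at this; exact this.2
    rw [LinearMap.mem_ker, Matrix.toLin'_apply]
    apply hker
    · intro q hq
      have h1 : q ≠ (m : Fin N) := fun hh => hq (hh ▸ hβm)
      have h2 : q ≠ m₀ := fun hh => hq (hh ▸ hβm₀)
      simp [hf, Pi.single_apply, h1, h2]
    · simp [hf, Pi.single_apply, Finset.sum_ite_eq']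
  have hfind : LinearIndependent ℝ f := by
    rw [Fintype.linearIndependent_iff]
    intro g hg m'
    have := congrFun hg (m' : Fin N)
    simp only [Finset.sum_apply, Pi.smul_apply, Pi.zero_apply, smul_eq_mul] at this
    have hm'ne : (m' : Fin N) ≠ m₀ := Finset.ne_of_mem_erase m'.2
    have key : ∀ m : B', g m * f m (m' : Fin N) = if m = m' then g m' else 0 := by
      intro m
      simp only [hf, Pi.sub_apply, Pi.single_apply]
      rw [if_neg hm'ne]
      by_cases h : m = m'
      · subst h; simp
      · have : (m' : Fin N) ≠ (m : Fin N) := fun hh => h (Subtype.ext hh.symm)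
        simp [this, h]
    rw [Finset.sum_congr rfl (fun m _ => key m), Finset.sum_ite_eq' _ m',
      if_pos (Finset.mem_univ m')] at this
    exact this
  -- conclude
  set p : Submodule ℝ (Fin N → ℝ) := LinearMap.ker (Matrix.toLin' M) with hp
  set g : B' → p := fun m => ⟨f m, hfmem m⟩ with hg
  have hgind : LinearIndependent ℝ g := by
    apply LinearIndependent.of_comp p.subtype
    convert hfind
    rfl
  have := hgind.fintype_card_le_finrank
  rw [Fintype.card_coe, hB'card] at this
  exact this
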